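/- Let t be a positive integer and let n be an integer with ⌊n/t⌋ ≥ 3. Partition the n coordinates into t pairwise disjoint blocks each containing at least ⌊n/t⌋ coordinates. Then the class H_n^(t) of DNFs with t cubic terms shatters a set of size t · (⌊log₂(⌊n/t⌋ - 2)⌋ + 1); consequently the VC dimension of H_n^(t) is at least t · (⌊log₂(⌊n/t⌋ - 2)⌋ + 1). -/
import Mathlib


/-- `h : {0,1}^n → {0,1}` is a cubic monomial: `h x = x_i^a ∧ x_j^b ∧ x_k^c`
for some `i < j < k` and exponents `a b c`, where the literal `x_i^a` is true
iff `x i = a`. -/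
def IsCubicMonomial (n : ℕ) (h : (Fin n → Bool) → Bool) : Prop :=
  ∃ (i j k : Fin n) (a b c : Bool), i < j ∧ j < k ∧
    ∀ x, h x = ((x i == a) && (x j == b) && (x k == c))

/-- The class `H_n^(t)` of DNFs consisting of `t` distinct cubic monomials in
`n` variables: Boolean functions expressible as the pointwise disjunction of a
set of `t` distinct cubic monomials. -/
def dnfCubic (n t : ℕ) : Set ((Fin n → Bool) → Bool) :=
  {h | ∃ T : Finset ((Fin n → Bool) → Bool), T.card = t ∧
        (∀ g ∈ T, IsCubicMonomial n g) ∧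
        ∀ x, (h x = true ↔ ∃ g ∈ T, g x = true)}

/-- A class `H` of Boolean functions shatters a finite set `S` if every
labeling of `S` is realized by some member of `H`. -/
def Shatters {α : Type*} (H : Set (α → Bool)) (S : Finset α) : Prop :=
  ∀ y : α → Bool, ∃ h ∈ H, ∀ x ∈ S, h x = y x

/-- The VC dimension of a class of Boolean functions: the largest cardinality
of a shattered subset of the domain. -/
noncomputable def VCDim {α : Type*} (H : Set (α → Bool)) : ℕ :=
  sSup {N | ∃ S : Finset α, Shatters H S ∧ S.card = N}

section Aux

/-- Encode the first `d` bits of `Y` as a natural number. -/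
def encBits : (ℕ → Bool) → ℕ → ℕ
  | _, 0 => 0
  | Y, d+1 => (Y 0).toNat + 2 * encBits (fun i => Y (i+1)) d

lemma encBits_lt (Y : ℕ → Bool) (d : ℕ) : encBits Y d < 2^d := by
  induction d generalizing Y with
  | zero => simp [encBits]
  | succ d ih =>
    have := ih (fun i => Y (i+1))
    have hb : (Y 0).toNat < 2 := Bool.toNat_lt _
    simp only [encBits, pow_succ]
    omega

lemma testBit_encBits (Y : ℕ → Bool) (d s : ℕ) (hs : s < d) :
    (encBits Y d).testBit s = Y s := by
  induction d generalizing Y s with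
  | zero => omega
  | succ d ih =>
    cases s with
    | zero =>
      rw [encBits, Nat.testBit_zero]
      cases h : Y 0 <;> simp [h, Nat.add_mul_mod_self_left]
    | succ s =>
      rw [encBits, Nat.testBit_succ]
      have h2 : ((Y 0).toNat + 2 * encBits (fun i => Y (i+1)) d) / 2
          = encBits (fun i => Y (i+1)) d := by
        have : (Y 0).toNat < 2 := Bool.toNat_lt _
        omega
      rw [h2, ih (fun i => Y (i+1)) s (by omega)]

lemma block_lt (t m n : ℕ) (hmn : t * m ≤ n) (j : Fin t) (o : ℕ) (ho : o < m) :
    j.1 * m + o < n := by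
  have h1 : (j.1 + 1) * m ≤ t * m := Nat.mul_le_mul_right m j.2
  have h2 : (j.1 + 1) * m = j.1 * m + m := by ring
  omega

lemma other_block {t : ℕ} (m : ℕ) (hm : 0 < m) (j j' : Fin t) (hne : j' ≠ j) :
    j'.1 * m < j.1 * m ∨ j.1 * m + m ≤ j'.1 * m := by
  have hv : j'.1 ≠ j.1 := fun h => hne (Fin.ext h)
  rcases Nat.lt_or_ge j'.1 j.1 with h | h
  · exact Or.inl (Nat.mul_lt_mul_of_lt_of_le h (le_refl m) hm)
  · right
    have h3 : j.1 + 1 ≤ j'.1 := by omega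
    have h4 : (j.1 + 1) * m ≤ j'.1 * m := Nat.mul_le_mul_right m h3
    have h5 : (j.1 + 1) * m = j.1 * m + m := by ring
    omega

/-- The `s`-th point of the `j`-th group. -/
def bPoint (n t m d : ℕ) (j : Fin t) (s : Fin d) : Fin n → Bool := fun i =>
  if i.1 < j.1 * m then false
  else if i.1 < j.1 * m + 2 then true
  else if i.1 < j.1 * m + m then Nat.testBit (i.1 - (j.1 * m + 2)) s.1
  else false

lemma bPoint_eval_low {n t m d : ℕ} (j : Fin t) (s : Fin d) (i : Fin n) (v : ℕ)
    (hv : i.1 = v) (h1 : j.1 * m ≤ v) (h2 : v < j.1 * m + 2) :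
    bPoint n t m d j s i = true := by
  simp only [bPoint, hv]; rw [if_neg (by omega), if_pos h2]

lemma bPoint_eval_bit {n t m d : ℕ} (j : Fin t) (s : Fin d) (i : Fin n) (r : ℕ)
    (hi : i.1 = j.1 * m + 2 + r) (hr : r < m - 2) (hm : 3 ≤ m) :
    bPoint n t m d j s i = Nat.testBit r s.1 := by
  simp only [bPoint, hi]
  rw [if_neg (by omega), if_neg (by omega), if_pos (by omega)]
  congr 1; omega

lemma bPoint_eval_out {n t m d : ℕ} (j : Fin t) (s : Fin d) (i : Fin n) (v : ℕ)
    (hv : i.1 = v) (hm : 3 ≤ m) (h : v < j.1 * m ∨ j.1 * m + m ≤ v) :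
    bPoint n t m d j s i = false := by
  rcases h with h | h
  · simp only [bPoint, hv]; rw [if_pos h]
  · simp only [bPoint, hv]
    rw [if_neg (by omega), if_neg (by omega), if_neg (by omega)]

/-- The cubic monomial for block `j`, free coordinate `r` with sign `c`. -/
def bMono (n t m : ℕ) (hmn : t * m ≤ n) (hm : 3 ≤ m) (j : Fin t) (r : ℕ)
    (hr : r < m - 2) (c : Bool) : (Fin n → Bool) → Bool :=
  fun x =>
    (x ⟨j.1 * m, by have := block_lt t m n hmn j 0 (by omega); omega⟩ == true) &&
    (x ⟨j.1 * m + 1, by have := block_lt t m n hmn j 1 (by omega); omega⟩ == true) &&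
    (x ⟨j.1 * m + 2 + r, by have := block_lt t m n hmn j (2 + r) (by omega); omega⟩ == c)

/-- Witness input separating monomials of different blocks. -/
def bWit (n t m : ℕ) (j : Fin t) (r : ℕ) (c : Bool) : Fin n → Bool :=
  fun i => if i.1 = j.1 * m + 2 + r then c else decide (i.1 = j.1 * m ∨ i.1 = j.1 * m + 1)

lemma bMono_wit_self (n t m : ℕ) (hmn : t * m ≤ n) (hm : 3 ≤ m) (j : Fin t) (r : ℕ)
    (hr : r < m - 2) (c : Bool) :
    bMono n t m hmn hm j r hr c (bWit n t m j r c) = true := by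
  simp only [bMono, bWit]
  rw [if_neg (show ¬(j.1 * m = j.1 * m + 2 + r) by omega),
      if_neg (show ¬(j.1 * m + 1 = j.1 * m + 2 + r) by omega)]
  simp

lemma bMono_wit_other (n t m : ℕ) (hmn : t * m ≤ n) (hm : 3 ≤ m) (j j' : Fin t)
    (hne : j' ≠ j) (r r' : ℕ) (hr : r < m - 2) (hr' : r' < m - 2) (c c' : Bool) :
    bMono n t m hmn hm j' r' hr' c' (bWit n t m j r c) = false := by
  simp only [bMono, bWit]
  rcases other_block m (by omega) j j' hne with h | h <;>
  · rw [if_neg (show ¬(j'.1 * m = j.1 * m + 2 + r) by omega),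
        decide_eq_false (show ¬(j'.1 * m = j.1 * m ∨ j'.1 * m = j.1 * m + 1) by omega)]
    simp

lemma bMono_bPoint_self (n t m d : ℕ) (hmn : t * m ≤ n) (hm : 3 ≤ m) (j : Fin t)
    (s : Fin d) (r : ℕ) (hr : r < m - 2) (c : Bool) :
    bMono n t m hmn hm j r hr c (bPoint n t m d j s) = (Nat.testBit r s.1 == c) := by
  simp only [bMono]
  rw [bPoint_eval_low j s _ (j.1 * m) rfl (by omega) (by omega),
      bPoint_eval_low j s _ (j.1 * m + 1) rfl (by omega) (by omega),
      bPoint_eval_bit j s _ r rfl hr hm]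
  simp

lemma bMono_bPoint_other (n t m d : ℕ) (hmn : t * m ≤ n) (hm : 3 ≤ m) (j j' : Fin t)
    (hne : j' ≠ j) (s : Fin d) (r : ℕ) (hr : r < m - 2) (c : Bool) :
    bMono n t m hmn hm j' r hr c (bPoint n t m d j s) = false := by
  simp only [bMono]
  rw [bPoint_eval_out j s _ (j'.1 * m) rfl hm (other_block m (by omega) j j' hne)]
  simp

lemma bMono_isCubic (n t m : ℕ) (hmn : t * m ≤ n) (hm : 3 ≤ m) (j : Fin t) (r : ℕ)
    (hr : r < m - 2) (c : Bool) : IsCubicMonomial n (bMono n t m hmn hm j r hr c) := by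
  refine ⟨_, _, _, true, true, c, Fin.mk_lt_mk.2 (by omega), Fin.mk_lt_mk.2 (by omega),
    fun x => rfl⟩

end Aux

/-- For `t ≥ 1` and `⌊n/t⌋ ≥ 3` (splitting the `n` coordinates into `t` disjoint
blocks of at least `⌊n/t⌋` coordinates each), the class `H_n^(t)` of DNFs with `t`
cubic terms shatters a set of size `t · (⌊log₂(⌊n/t⌋ - 2)⌋ + 1)`; consequently its
VC dimension is at least `t · (⌊log₂(⌊n/t⌋ - 2)⌋ + 1)`. -/
theorem stmt7 (n t : ℕ) (ht : 0 < t) (hnt : 3 ≤ n / t) :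
    (∃ S : Finset (Fin n → Bool), Shatters (dnfCubic n t) S ∧
      S.card = t * (Nat.log 2 (n / t - 2) + 1)) ∧
    t * (Nat.log 2 (n / t - 2) + 1) ≤ VCDim (dnfCubic n t) := by
  set m := n / t with hm
  set d := Nat.log 2 (m - 2) + 1 with hd
  have hmn : t * m ≤ n := by rw [hm, mul_comm]; exact Nat.div_mul_le_self n t
  have hd1 : 2 ^ (d - 1) ≤ m - 2 := by
    rw [hd, Nat.add_sub_cancel]; exact Nat.pow_log_le_self 2 (by omega)
  -- injectivity of the point family
  have hPinj : Function.Injective (fun p : Fin t × Fin d => bPoint n t m d p.1 p.2) := by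
    rintro ⟨j, s⟩ ⟨j', s'⟩ hp
    simp only at hp
    have hj : j = j' := by
      by_contra hne
      have hlt : j.1 * m + 0 < n := block_lt t m n hmn j 0 (by omega)
      have h1 : bPoint n t m d j s ⟨j.1 * m, by omega⟩ = true :=
        bPoint_eval_low j s _ (j.1 * m) rfl (le_refl _) (by omega)
      have h2 : bPoint n t m d j' s' ⟨j.1 * m, by omega⟩ = false :=
        bPoint_eval_out j' s' _ (j.1 * m) rfl hnt
          (other_block m (by omega) j' j hne)
      have := congrFun hp (⟨j.1 * m, by omega⟩ : Fin n)
      rw [h1, h2] at this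
      exact Bool.noConfusion this
    subst hj
    have hs : s = s' := by
      by_contra hne
      have hne' : s.1 ≠ s'.1 := fun h => hne (Fin.ext h)
      have hud : min s.1 s'.1 + 1 ≤ d - 1 := by
        have := s.2; have := s'.2; omega
      have hu : 2 ^ min s.1 s'.1 < m - 2 := by
        calc 2 ^ min s.1 s'.1 < 2 ^ (min s.1 s'.1 + 1) :=
              Nat.pow_lt_pow_succ one_lt_two
          _ ≤ 2 ^ (d - 1) := Nat.pow_le_pow_right (by norm_num) hud
          _ ≤ m - 2 := hd1
      have hlt : j.1 * m + (2 + 2 ^ min s.1 s'.1) < n :=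
        block_lt t m n hmn j (2 + 2 ^ min s.1 s'.1) (by omega)
      have hiv : (⟨j.1 * m + 2 + 2 ^ min s.1 s'.1, by omega⟩ : Fin n).1
          = j.1 * m + 2 + 2 ^ min s.1 s'.1 := rfl
      have e1 := bPoint_eval_bit j s _ (2 ^ min s.1 s'.1) hiv hu hnt
      have e2 := bPoint_eval_bit j s' _ (2 ^ min s.1 s'.1) hiv hu hnt
      have := congrFun hp (⟨j.1 * m + 2 + 2 ^ min s.1 s'.1, by omega⟩ : Fin n)
      rw [e1, e2, Nat.testBit_two_pow, Nat.testBit_two_pow] at this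
      rw [decide_eq_decide] at this
      omega
    rw [hs]
  -- the shattered set
  set S : Finset (Fin n → Bool) :=
    (Finset.univ : Finset (Fin t × Fin d)).image (fun p => bPoint n t m d p.1 p.2)
    with hS
  have hCard : S.card = t * d := by
    rw [hS, Finset.card_image_of_injective _ hPinj, Finset.card_univ]
    simp
  have hShat : Shatters (dnfCubic n t) S := by
    intro y
    set Y : Fin t → ℕ → Bool :=
      fun j s => if hs : s < d then y (bPoint n t m d j ⟨s, hs⟩) else false with hY
    set cc : Fin t → Bool := fun j => !(Y j (d - 1)) with hcc
    set rr : Fin t → ℕ := fun j => encBits (fun s => (Y j s == cc j)) (d - 1) with hrr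
    have hrlt : ∀ j, rr j < 2 ^ (d - 1) := by
      intro j; simp only [hrr]; exact encBits_lt _ _
    have hr : ∀ j, rr j < m - 2 := fun j => lt_of_lt_of_le (hrlt j) hd1
    have key : ∀ (j : Fin t) (s : Fin d),
        (Nat.testBit (rr j) s.1 == cc j) = y (bPoint n t m d j s) := by
      intro j s
      have hboo : ∀ a b : Bool, ((a == b) == b) = a := by decide
      have hboo2 : ∀ a : Bool, (false == !a) = a := by decide
      have hy : Y j s.1 = y (bPoint n t m d j s) := by
        simp only [hY]; rw [dif_pos s.2]
      rcases Nat.lt_or_ge s.1 (d - 1) with h | h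
      · have hbit : Nat.testBit (rr j) s.1 = (Y j s.1 == cc j) := by
          simp only [hrr]; exact testBit_encBits _ _ _ h
        rw [hbit, hboo, hy]
      · have hs1 : s.1 = d - 1 := by have := s.2; omega
        rw [hs1, Nat.testBit_lt_two_pow (hrlt j), hcc]
        rw [hboo2, ← hs1, hy]
    have hMinj : Function.Injective
        (fun j : Fin t => bMono n t m hmn hnt j (rr j) (hr j) (cc j)) := by
      intro j j' hjj'
      by_contra hne
      have h1 := bMono_wit_self n t m hmn hnt j (rr j) (hr j) (cc j)
      have h2 := bMono_wit_other n t m hmn hnt j j' (Ne.symm hne)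
        (rr j) (rr j') (hr j) (hr j') (cc j) (cc j')
      have := congrFun hjj' (bWit n t m j (rr j) (cc j))
      simp only at this
      rw [h1, h2] at this
      exact Bool.noConfusion this
    set T : Finset ((Fin n → Bool) → Bool) :=
      (Finset.univ : Finset (Fin t)).image
        (fun j => bMono n t m hmn hnt j (rr j) (hr j) (cc j)) with hT
    refine ⟨fun x => decide (∃ g ∈ T, g x = true), ⟨T, ?_, ?_, ?_⟩, ?_⟩
    · rw [hT, Finset.card_image_of_injective _ hMinj, Finset.card_univ, Fintype.card_fin]
    · intro g hg
      rw [hT] at hg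
      obtain ⟨j, -, rfl⟩ := Finset.mem_image.1 hg
      exact bMono_isCubic n t m hmn hnt j (rr j) (hr j) (cc j)
    · intro x; simp
    · intro x hx
      rw [hS] at hx
      obtain ⟨⟨j, s⟩, -, rfl⟩ := Finset.mem_image.1 hx
      simp only
      have hEx : (∃ g ∈ T, g (bPoint n t m d j s) = true)
          ↔ y (bPoint n t m d j s) = true := by
        constructor
        · rintro ⟨g, hg, hgx⟩
          rw [hT] at hg
          obtain ⟨j', -, rfl⟩ := Finset.mem_image.1 hg
          by_cases hjj : j' = j
          · subst hjj
            rw [bMono_bPoint_self n t m d hmn hnt j' s (rr j') (hr j') (cc j'),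
              key j' s] at hgx
            exact hgx
          · rw [bMono_bPoint_other n t m d hmn hnt j j' hjj s (rr j') (hr j')
              (cc j')] at hgx
            exact Bool.noConfusion hgx
        · intro hy
          refine ⟨_, by rw [hT]; exact Finset.mem_image_of_mem _ (Finset.mem_univ j), ?_⟩
          rw [bMono_bPoint_self n t m d hmn hnt j s (rr j) (hr j) (cc j), key j s]
          exact hy
      cases hyv : y (bPoint n t m d j s) with
      | true => exact decide_eq_true (hEx.2 hyv)
      | false =>
        apply decide_eq_false
        intro hcon
        rw [hEx.1 hcon] at hyv
        exact Bool.noConfusion hyv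
  refine ⟨⟨S, hShat, hCard⟩, ?_⟩
  apply le_csSup
  · exact ⟨Fintype.card (Fin n → Bool), fun N hN => by
      obtain ⟨S', -, rfl⟩ := hN; exact Finset.card_le_univ S'⟩
  · exact ⟨S, hShat, hCard⟩
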